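/- For every finite sequence of points contained in the closed unit ball of (ℝ², ℓ2) (the Euclidean unit disk), there exists a wake-up tree rooted at the origin spanning these points whose makespan is at most 5√2. Equivalently, γ(ℓ2) ≤ 5√2 ≈ 7.07. -/

import Mathlib

/-- Binary trees with labeled nodes. A wake-up tree with source `s` is modeled by the
subtree hanging at the unique child of the root (the root itself is labeled `s`). -/
inductive BTree (α : Type) where
  | nil : BTree α
  | node : α → BTree α → BTree α → BTree α

namespace BTree
/-- The multiset of labels of a binary tree. -/
def labels {α : Type} : BTree α → Multiset α
  | .nil => 0
  | .node p l r => p ::ₘ (labels l + labels r)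
end BTree

/-- `η` is a norm on `ℝ²`. -/
def IsNorm (η : ℝ × ℝ → ℝ) : Prop :=
  (∀ x, η x = 0 ↔ x = 0) ∧
  (∀ (a : ℝ) (x : ℝ × ℝ), η (a • x) = |a| * η x) ∧
  (∀ x y : ℝ × ℝ, η (x + y) ≤ η x + η y)

/-- The makespan of a wake-up tree: maximum total η-edge-length of a root-to-leaf path,
where the previous (parent) position is `s`. -/
noncomputable def makespan (η : ℝ × ℝ → ℝ) : ℝ × ℝ → BTree (ℝ × ℝ) → ℝ
  | _, .nil => 0
  | s, .node p l r => η (p - s) + max (makespan η p l) (makespan η p r)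

/-- `γₙ(η)`: sup over sequences of `n` points in the closed unit η-ball of the minimum
makespan of a wake-up tree rooted at the origin spanning them. -/
noncomputable def gammaN (η : ℝ × ℝ → ℝ) (n : ℕ) : ℝ :=
  sSup { m : ℝ | ∃ ps : List (ℝ × ℝ), ps.length = n ∧ (∀ p ∈ ps, η p ≤ 1) ∧
    m = sInf { t : ℝ | ∃ T : BTree (ℝ × ℝ), T.labels = ↑ps ∧ makespan η 0 T = t } }

/-- The wake-up ratio `γ(η) = sup_n γₙ(η)`. -/
noncomputable def gamma (η : ℝ × ℝ → ℝ) : ℝ := sSup (Set.range (gammaN η))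

/-- The ℓ1-norm on ℝ². -/
noncomputable def l1 (p : ℝ × ℝ) : ℝ := |p.1| + |p.2|

/-- The Euclidean (ℓ2) norm on ℝ². -/
noncomputable def l2 (p : ℝ × ℝ) : ℝ := Real.sqrt (p.1 ^ 2 + p.2 ^ 2)

noncomputable local instance (priority := 2000) myBEq : BEq (ℝ × ℝ) := instBEqOfDecidableEq
local instance (priority := 2000) myLawful : LawfulBEq (ℝ × ℝ) where
  eq_of_beq := of_decide_eq_true
  rfl := of_decide_eq_self_eq_true _

lemma l2_nonneg (p : ℝ × ℝ) : 0 ≤ l2 p := Real.sqrt_nonneg _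

lemma makespan_l2_nonneg (T : BTree (ℝ × ℝ)) : ∀ s, 0 ≤ makespan l2 s T := by
  induction T with
  | nil => intro s; simp [makespan]
  | node p l r ihl ihr =>
    intro s
    simp only [makespan]
    have := ihl p
    have := ihr p
    have h0 := l2_nonneg (p - s)
    have : makespan l2 p l ≤ max (makespan l2 p l) (makespan l2 p r) := le_max_left _ _
    linarith

lemma l2_sub_le (p q : ℝ × ℝ) : l2 (p - q) ≤ |p.1 - q.1| + |p.2 - q.2| := by
  have h1 : (p - q).1 = p.1 - q.1 := rfl
  have h2 : (p - q).2 = p.2 - q.2 := rfl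
  unfold l2
  rw [h1, h2]
  have hnn : (0:ℝ) ≤ |p.1 - q.1| + |p.2 - q.2| := by positivity
  rw [show (p.1 - q.1)^2 + (p.2 - q.2)^2 = |p.1 - q.1|^2 + |p.2 - q.2|^2 by
    rw [sq_abs, sq_abs]]
  calc Real.sqrt (|p.1 - q.1|^2 + |p.2 - q.2|^2)
      ≤ Real.sqrt ((|p.1 - q.1| + |p.2 - q.2|)^2) := by
        apply Real.sqrt_le_sqrt
        nlinarith [abs_nonneg (p.1 - q.1), abs_nonneg (p.2 - q.2)]
    _ = |p.1 - q.1| + |p.2 - q.2| := Real.sqrt_sq hnn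

lemma abs_fst_le_l2 (p : ℝ × ℝ) : |p.1| ≤ l2 p := by
  unfold l2
  rw [← Real.sqrt_sq_eq_abs]
  exact Real.sqrt_le_sqrt (by nlinarith [sq_nonneg p.2])

lemma abs_snd_le_l2 (p : ℝ × ℝ) : |p.2| ≤ l2 p := by
  unfold l2
  rw [← Real.sqrt_sq_eq_abs]
  exact Real.sqrt_le_sqrt (by nlinarith [sq_nonneg p.1])

lemma exists_max_snd : ∀ (S : List (ℝ × ℝ)), S ≠ [] → ∃ p ∈ S, ∀ r ∈ S, r.2 ≤ p.2 := by
  intro S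
  induction S with
  | nil => simp
  | cons a l ih =>
    intro _
    rcases eq_or_ne l [] with rfl | hl
    · exact ⟨a, by simp, by simp⟩
    · obtain ⟨p, hp, hmax⟩ := ih hl
      rcases le_total a.2 p.2 with h | h
      · refine ⟨p, List.mem_cons_of_mem _ hp, ?_⟩
        intro r hr
        rcases List.mem_cons.mp hr with rfl | hr
        · exact h
        · exact hmax r hr
      · refine ⟨a, List.mem_cons_self, ?_⟩
        intro r hr
        rcases List.mem_cons.mp hr with rfl | hr
        · exact le_rfl
        · exact (hmax r hr).trans h

/-- Sweep lemma: points in a strip of width `w`, all below parent `q`, all above `-1`,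
horizontal distance to parent at most `D`: makespan at most `D + 2w + (q.2 + 1)`. -/
lemma sweep : ∀ (n : ℕ) (S : List (ℝ × ℝ)) (q : ℝ × ℝ) (u w D : ℝ),
    S.length ≤ n → 0 ≤ w → 0 ≤ D → (-1 : ℝ) ≤ q.2 →
    (∀ p ∈ S, u ≤ p.1) → (∀ p ∈ S, p.1 ≤ u + w) →
    (∀ p ∈ S, p.2 ≤ q.2) → (∀ p ∈ S, -1 ≤ p.2) →
    (∀ p ∈ S, |p.1 - q.1| ≤ D) →
    ∃ T : BTree (ℝ × ℝ), T.labels = ↑S ∧ makespan l2 q T ≤ D + 2 * w + (q.2 + 1) := by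
  intro n
  induction n with
  | zero =>
    intro S q u w D hlen hw hD hq _ _ _ _ _
    have : S = [] := List.length_eq_zero_iff.mp (Nat.le_zero.mp hlen)
    subst this
    exact ⟨.nil, by simp [BTree.labels], by simp [makespan]; linarith⟩
  | succ n ih =>
    intro S q u w D hlen hw hD hq h1 h2 h3 h4 h5
    rcases eq_or_ne S [] with rfl | hne
    · exact ⟨.nil, by simp [BTree.labels], by simp [makespan]; linarith⟩
    obtain ⟨p1, hp1, hmax⟩ := exists_max_snd S hne
    set S' : List (ℝ × ℝ) := S.erase p1 with hS'
    have hsub : ∀ p ∈ S', p ∈ S := fun p hp => List.mem_of_mem_erase hp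
    have hlenS' : S'.length ≤ n := by
      have h := List.length_erase_of_mem hp1
      have hpos : 1 ≤ S.length := List.length_pos_iff.mpr hne
      rw [hS', h]
      omega
    set m : ℝ := u + w / 2 with hm
    set pred : ℝ × ℝ → Bool := fun p => decide (p.1 ≤ m) with hpred
    set L : List (ℝ × ℝ) := S'.filter pred with hL
    set R : List (ℝ × ℝ) := S'.filter (fun a => !pred a) with hR
    have hLmem : ∀ p ∈ L, p ∈ S' ∧ p.1 ≤ m := by
      intro p hp
      have := List.mem_filter.mp hp
      exact ⟨this.1, of_decide_eq_true this.2⟩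
    have hRmem : ∀ p ∈ R, p ∈ S' ∧ m ≤ p.1 := by
      intro p hp
      have := List.mem_filter.mp hp
      refine ⟨this.1, ?_⟩
      have hb : pred p = false := by
        have := this.2
        simpa using this
      have : ¬ (p.1 ≤ m) := of_decide_eq_false hb
      linarith [not_le.mp this]
    have hp1u : u ≤ p1.1 := h1 p1 hp1
    have hp1uw : p1.1 ≤ u + w := h2 p1 hp1
    have hDx : ∀ p ∈ S', |p.1 - p1.1| ≤ w := by
      intro p hp
      have hu := h1 p (hsub p hp)
      have huw := h2 p (hsub p hp)
      rw [abs_le]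
      constructor <;> linarith
    -- left subtree
    obtain ⟨TL, hTLlab, hTLms⟩ := ih L p1 u (w / 2) w
      (le_trans (List.length_filter_le _ _) hlenS') (by linarith) hw (h4 p1 hp1)
      (fun p hp => h1 p (hsub p (hLmem p hp).1))
      (fun p hp => (hLmem p hp).2)
      (fun p hp => hmax p (hsub p (hLmem p hp).1))
      (fun p hp => h4 p (hsub p (hLmem p hp).1))
      (fun p hp => hDx p (hLmem p hp).1)
    -- right subtree
    obtain ⟨TR, hTRlab, hTRms⟩ := ih R p1 m (w / 2) w
      (le_trans (List.length_filter_le _ _) hlenS') (by linarith) hw (h4 p1 hp1)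
      (fun p hp => (hRmem p hp).2)
      (fun p hp => by
        have := h2 p (hsub p (hRmem p hp).1)
        rw [hm]; linarith)
      (fun p hp => hmax p (hsub p (hRmem p hp).1))
      (fun p hp => h4 p (hsub p (hRmem p hp).1))
      (fun p hp => hDx p (hRmem p hp).1)
    refine ⟨.node p1 TL TR, ?_, ?_⟩
    · show (p1 ::ₘ (TL.labels + TR.labels)) = (↑S : Multiset _)
      rw [hTLlab, hTRlab]
      have hadd : (↑L + ↑R : Multiset (ℝ × ℝ)) = ↑(L ++ R) := by exact_mod_cast rfl
      rw [hadd, Multiset.cons_coe, Multiset.coe_eq_coe]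
      have hperm1 : List.Perm (L ++ R) S' := List.filter_append_perm pred S'
      have hperm2 : List.Perm S (p1 :: S') := by rw [hS']; exact List.perm_cons_erase hp1
      exact (hperm1.cons p1).trans hperm2.symm
    · show l2 (p1 - q) + max (makespan l2 p1 TL) (makespan l2 p1 TR) ≤ D + 2 * w + (q.2 + 1)
      have hedge : l2 (p1 - q) ≤ D + (q.2 - p1.2) := by
        have h := l2_sub_le p1 q
        have habs : |p1.2 - q.2| = q.2 - p1.2 := by
          rw [abs_sub_comm]
          exact abs_of_nonneg (by linarith [h3 p1 hp1])
        have hx := h5 p1 hp1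
        linarith
      have hmaxle : max (makespan l2 p1 TL) (makespan l2 p1 TR) ≤ w + 2 * (w / 2) + (p1.2 + 1) :=
        max_le hTLms hTRms
      have := h3 p1 hp1
      have hadd := add_le_add hedge hmaxle
      linarith

lemma main_construction : ∀ ps : List (ℝ × ℝ), (∀ p ∈ ps, l2 p ≤ 1) →
    ∃ T : BTree (ℝ × ℝ), T.labels = ↑ps ∧ makespan l2 0 T ≤ 5 * Real.sqrt 2 := by
  intro ps hps
  have hsqrt2 : (7 : ℝ) ≤ 5 * Real.sqrt 2 := by
    have h2 : (Real.sqrt 2) ^ 2 = 2 := Real.sq_sqrt (by norm_num)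
    have h0 : 0 ≤ Real.sqrt 2 := Real.sqrt_nonneg 2
    nlinarith
  rcases eq_or_ne ps [] with rfl | hne
  · exact ⟨.nil, by simp [BTree.labels], by simp only [makespan]; positivity⟩
  obtain ⟨p1, hp1, hmax⟩ := exists_max_snd ps hne
  have hxb : ∀ p ∈ ps, |p.1| ≤ 1 := fun p hp => (abs_fst_le_l2 p).trans (hps p hp)
  have hyb : ∀ p ∈ ps, |p.2| ≤ 1 := fun p hp => (abs_snd_le_l2 p).trans (hps p hp)
  set S' : List (ℝ × ℝ) := ps.erase p1 with hS'
  have hsub : ∀ p ∈ S', p ∈ ps := fun p hp => List.mem_of_mem_erase hp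
  set pred : ℝ × ℝ → Bool := fun p => decide (p.1 ≤ 0) with hpred
  set L : List (ℝ × ℝ) := S'.filter pred with hL
  set R : List (ℝ × ℝ) := S'.filter (fun a => !pred a) with hR
  have hLmem : ∀ p ∈ L, p ∈ S' ∧ p.1 ≤ 0 := by
    intro p hp
    have := List.mem_filter.mp hp
    exact ⟨this.1, of_decide_eq_true this.2⟩
  have hRmem : ∀ p ∈ R, p ∈ S' ∧ (0:ℝ) ≤ p.1 := by
    intro p hp
    have := List.mem_filter.mp hp
    refine ⟨this.1, ?_⟩
    have hb : pred p = false := by simpa using this.2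
    have : ¬ (p.1 ≤ 0) := of_decide_eq_false hb
    linarith [not_le.mp this]
  have hp1y : -1 ≤ p1.2 := by
    have := hyb p1 hp1
    rw [abs_le] at this
    exact this.1
  have hDx : ∀ p ∈ S', |p.1 - p1.1| ≤ 2 := by
    intro p hp
    have h1 := hxb p (hsub p hp)
    have h2 := hxb p1 hp1
    rw [abs_le] at h1 h2 ⊢
    constructor <;> linarith [h1.1, h1.2, h2.1, h2.2]
  obtain ⟨TL, hTLlab, hTLms⟩ := sweep L.length L p1 (-1) 1 2 le_rfl (by norm_num)
    (by norm_num) hp1y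
    (fun p hp => by have := hxb p (hsub p (hLmem p hp).1); rw [abs_le] at this; linarith [this.1])
    (fun p hp => by have := (hLmem p hp).2; linarith)
    (fun p hp => hmax p (hsub p (hLmem p hp).1))
    (fun p hp => by have := hyb p (hsub p (hLmem p hp).1); rw [abs_le] at this; linarith [this.1])
    (fun p hp => hDx p (hLmem p hp).1)
  obtain ⟨TR, hTRlab, hTRms⟩ := sweep R.length R p1 0 1 2 le_rfl (by norm_num)
    (by norm_num) hp1y
    (fun p hp => (hRmem p hp).2)
    (fun p hp => by have := hxb p (hsub p (hRmem p hp).1); rw [abs_le] at this; linarith [this.2])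
    (fun p hp => hmax p (hsub p (hRmem p hp).1))
    (fun p hp => by have := hyb p (hsub p (hRmem p hp).1); rw [abs_le] at this; linarith [this.1])
    (fun p hp => hDx p (hRmem p hp).1)
  refine ⟨.node p1 TL TR, ?_, ?_⟩
  · show (p1 ::ₘ (TL.labels + TR.labels)) = (↑ps : Multiset _)
    rw [hTLlab, hTRlab]
    have hadd : (↑L + ↑R : Multiset (ℝ × ℝ)) = ↑(L ++ R) := by exact_mod_cast rfl
    rw [hadd, Multiset.cons_coe, Multiset.coe_eq_coe]
    have hperm1 : List.Perm (L ++ R) S' := List.filter_append_perm pred S'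
    have hperm2 : List.Perm ps (p1 :: S') := by rw [hS']; exact List.perm_cons_erase hp1
    exact (hperm1.cons p1).trans hperm2.symm
  · show l2 (p1 - 0) + max (makespan l2 p1 TL) (makespan l2 p1 TR) ≤ 5 * Real.sqrt 2
    have hedge : l2 (p1 - 0) ≤ 1 := by rw [sub_zero]; exact hps p1 hp1
    have hp1y2 : p1.2 ≤ 1 := by
      have := hyb p1 hp1; rw [abs_le] at this; exact this.2
    have hmaxle : max (makespan l2 p1 TL) (makespan l2 p1 TR) ≤ 2 + 2 * 1 + (p1.2 + 1) :=
      max_le hTLms hTRms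
    have : l2 (p1 - 0) + max (makespan l2 p1 TL) (makespan l2 p1 TR) ≤ 7 := by linarith
    linarith

/-- any finite sequence of points in the closed Euclidean unit disk admits a
wake-up tree rooted at the origin of makespan at most 5√2; equivalently, γ(ℓ2) ≤ 5√2. -/
theorem ftp_l2_makespan_le_five_sqrt_two :
    (∀ ps : List (ℝ × ℝ), (∀ p ∈ ps, l2 p ≤ 1) →
      ∃ T : BTree (ℝ × ℝ), T.labels = ↑ps ∧ makespan l2 0 T ≤ 5 * Real.sqrt 2) ∧
    gamma l2 ≤ 5 * Real.sqrt 2 := by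
  refine ⟨main_construction, ?_⟩
  have h0 : (0:ℝ) ≤ 5 * Real.sqrt 2 := by positivity
  apply Real.sSup_le _ h0
  rintro x ⟨n, rfl⟩
  apply Real.sSup_le _ h0
  rintro m ⟨ps, hlen, hball, rfl⟩
  obtain ⟨T0, hlab, hms⟩ := main_construction ps hball
  refine le_trans (csInf_le ⟨0, ?_⟩ ⟨T0, hlab, rfl⟩) hms
  rintro t ⟨T, hT, rfl⟩
  exact makespan_l2_nonneg T 0
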